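/- Let △ be a continuous t-norm on I = [0,1] and ⋆ a binary operation on I. If the convolution ⋏ is a t-norm on L, then 0 ⋆ x = x ⋆ 0 = 0 for all x ∈ I. -/

import Mathlib

open unitInterval

noncomputable section

instance : Fact ((0:ℝ) ≤ 1) := ⟨zero_le_one⟩

/-- A function `f : I → I` is normal if `sup {f x : x ∈ I} = 1`. -/
def IsNormal (f : I → I) : Prop := sSup (Set.range f) = 1

/-- A function `f : I → I` is convex if `f y ≥ min (f x) (f z)` whenever `x ≤ y ≤ z`. -/
def IsConvexFn (f : I → I) : Prop :=
  ∀ x y z : I, x ≤ y → y ≤ z → min (f x) (f z) ≤ f y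

/-- Membership in `L`, the set of normal convex functions from `I` to `I`. -/
def InL (f : I → I) : Prop := IsNormal f ∧ IsConvexFn f

/-- A t-norm on `I`: commutative, associative, increasing in each argument,
with neutral element `1`. -/
def IsTnorm (op : I → I → I) : Prop :=
  (∀ x y : I, op x y = op y x) ∧
  (∀ x y z : I, op (op x y) z = op x (op y z)) ∧
  (∀ y : I, Monotone fun x => op x y) ∧
  (∀ x : I, Monotone fun y => op x y) ∧
  (∀ x : I, op 1 x = x) ∧ (∀ x : I, op x 1 = x)

/-- A t-conorm on `I`: commutative, associative, increasing in each argument,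
with neutral element `0`. -/
def IsTconorm (op : I → I → I) : Prop :=
  (∀ x y : I, op x y = op y x) ∧
  (∀ x y z : I, op (op x y) z = op x (op y z)) ∧
  (∀ y : I, Monotone fun x => op x y) ∧
  (∀ x : I, Monotone fun y => op x y) ∧
  (∀ x : I, op 0 x = x) ∧ (∀ x : I, op x 0 = x)

/-- Continuity of a binary operation on `I`, as a map `I × I → I`. -/
def IsCont (op : I → I → I) : Prop := Continuous fun p : I × I => op p.1 p.2

/-- The convolution `(f ⋏ g)(x) = sup {f y ⋆ g z : y △ z = x}` (`star` playing the
role of `⋆` and `tri` the role of `△`); the sup of the empty set is `0`. -/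
def conv (star tri : I → I → I) (f g : I → I) : I → I :=
  fun x => sSup {a : I | ∃ y z : I, tri y z = x ∧ a = star (f y) (g z)}

/-- The meet `(f ⊓ g)(x) = sup {min (f y) (g z) : min y z = x}`. -/
def fmeet (f g : I → I) : I → I :=
  fun x => sSup {a : I | ∃ y z : I, min y z = x ∧ a = min (f y) (g z)}

/-- The partial order `f ⊑ g` iff `f ⊓ g = f`. -/
def sqle (f g : I → I) : Prop := fmeet f g = f

/-- The characteristic function `χ_{x}` of the singleton `{x}`. -/
def chi (x : I) : I → I := fun t => if t = x then 1 else 0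

/-- A binary operation `C` on functions is a t-norm on `L` if `L` is closed under `C` and,
on `L`, `C` is commutative, associative, has `χ_{1}` as neutral element, and is increasing
in each argument with respect to `⊑`. -/
def IsTnormOnL (C : (I → I) → (I → I) → (I → I)) : Prop :=
  (∀ f g, InL f → InL g → InL (C f g)) ∧
  (∀ f g, InL f → InL g → C f g = C g f) ∧
  (∀ f g h, InL f → InL g → InL h → C (C f g) h = C f (C g h)) ∧
  (∀ f, InL f → C f (chi 1) = f) ∧
  (∀ f g h, InL f → InL g → InL h → sqle g h → sqle (C f g) (C f h))

/-- A binary operation `C` on functions is a t-conorm on `L` if `L` is closed under `C` and,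
on `L`, `C` is commutative, associative, has `χ_{0}` as neutral element, and is increasing
in each argument with respect to `⊑`. -/
def IsTconormOnL (C : (I → I) → (I → I) → (I → I)) : Prop :=
  (∀ f g, InL f → InL g → InL (C f g)) ∧
  (∀ f g, InL f → InL g → C f g = C g f) ∧
  (∀ f g h, InL f → InL g → InL h → C (C f g) h = C f (C g h)) ∧
  (∀ f, InL f → C f (chi 0) = f) ∧
  (∀ f g h, InL f → InL g → InL h → sqle g h → sqle (C f g) (C f h))

/-- `f^L (x) = sup {f y : y ≤ x}`. -/
def fL (f : I → I) : I → I := fun x => sSup (f '' Set.Iic x)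

/-- `f^R (x) = sup {f y : y ≥ x}`. -/
def fR (f : I → I) : I → I := fun x => sSup (f '' Set.Ici x)

/-- The function `V_x (t) = (x - 1) * t + 1`. -/
def Vfn (x : I) : I → I := fun t =>
  ⟨(x.1 - 1) * t.1 + 1, by
    obtain ⟨hx0, hx1⟩ := x.2; obtain ⟨ht0, ht1⟩ := t.2
    constructor <;> nlinarith⟩

/-- The function `g(t) = max 0 (2t - 1)`. -/
def myg : I → I := fun t =>
  ⟨max 0 (2 * t.1 - 1), le_max_left _ _, by
    have := t.2.2
    apply max_le <;> linarith⟩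

def half : I := ⟨1/2, by norm_num⟩

def yhat (x : I) : I := ⟨(x.1 + 1) / 2, by
  have h0 := x.2.1; have h1 := x.2.2
  constructor <;> linarith⟩

lemma myg_yhat (x : I) : myg (yhat x) = x := by
  apply Subtype.ext
  simp only [myg, yhat]
  have h0 := x.2.1
  have : 2 * ((x.1 + 1) / 2) - 1 = x.1 := by ring
  rw [this, max_eq_right h0]

lemma myg_of_le_half {w : I} (hw : w ≤ half) : myg w = 0 := by
  apply Subtype.ext
  simp only [myg]
  have : (w : ℝ) ≤ 1/2 := hw
  have : 2 * w.1 - 1 ≤ 0 := by linarith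
  simp [max_eq_left this]

lemma myg_one : myg 1 = 1 := by
  apply Subtype.ext
  norm_num [myg]

lemma InL_myg : InL myg := by
  constructor
  · apply le_antisymm
    · exact sSup_le fun a ha => le_one'
    · exact le_sSup ⟨1, myg_one⟩
  · intro a b c hab hbc
    have : myg a ≤ myg b := by
      simp only [myg, Subtype.mk_le_mk]
      show (max 0 (2 * a.1 - 1) : ℝ) ≤ max 0 (2 * b.1 - 1)
      apply max_le (le_max_left _ _)
      have : (a : ℝ) ≤ b := hab
      have : 2 * a.1 - 1 ≤ 2 * b.1 - 1 := by linarith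
      exact le_trans this (le_max_right _ _)
    exact le_trans (min_le_left _ _) this

lemma chi_one_apply_one : chi 1 1 = 1 := by simp [chi]

lemma chi_one_apply_ne {z : I} (hz : z ≠ 1) : chi 1 z = 0 := by simp [chi, hz]

lemma InL_chi_one : InL (chi 1) := by
  constructor
  · apply le_antisymm
    · exact sSup_le fun a ha => le_one'
    · exact le_sSup ⟨1, chi_one_apply_one⟩
  · intro a b c hab hbc
    by_cases ha : a = 1
    · have hb : b = 1 := le_antisymm le_one' (ha ▸ hab)
      rw [hb, chi_one_apply_one]
      exact le_one'
    · rw [chi_one_apply_ne ha]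
      exact le_trans (min_le_left _ _) nonneg'

lemma half_ne_one : half ≠ 1 := by
  intro hh
  have : (1/2 : ℝ) = 1 := congrArg Subtype.val hh
  norm_num at this

theorem stmt_4 (star tri : I → I → I) (htri : IsTnorm tri) (htric : IsCont tri)
    (h : IsTnormOnL (conv star tri)) :
    ∀ x : I, star 0 x = 0 ∧ star x 0 = 0 := by
  obtain ⟨tcomm, tassoc, tmono1, tmono2, tone1, tone2⟩ := htri
  have hneut : conv star tri myg (chi 1) = myg := h.2.2.2.1 myg InL_myg
  have hcomm : conv star tri (chi 1) myg = myg := by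
    rw [h.2.1 (chi 1) myg InL_chi_one InL_myg]; exact hneut
  intro x
  constructor
  · -- star 0 x = 0
    set w : I := tri half (yhat x) with hwdef
    have hwle : w ≤ half := by
      calc w ≤ tri half 1 := tmono2 half le_one'
        _ = half := tone2 half
    have hmem : star 0 x ∈ {a : I | ∃ y z : I, tri y z = w ∧ a = star (chi 1 y) (myg z)} :=
      ⟨half, yhat x, rfl, by rw [chi_one_apply_ne half_ne_one, myg_yhat]⟩
    have hle : star 0 x ≤ conv star tri (chi 1) myg w := le_sSup hmem
    rw [hcomm, myg_of_le_half hwle] at hle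
    exact le_antisymm hle nonneg'
  · -- star x 0 = 0
    set w : I := tri (yhat x) half with hwdef
    have hwle : w ≤ half := by
      calc w ≤ tri 1 half := tmono1 half le_one'
        _ = half := tone1 half
    have hmem : star x 0 ∈ {a : I | ∃ y z : I, tri y z = w ∧ a = star (myg y) (chi 1 z)} :=
      ⟨yhat x, half, rfl, by rw [chi_one_apply_ne half_ne_one, myg_yhat]⟩
    have hle : star x 0 ≤ conv star tri myg (chi 1) w := le_sSup hmem
    rw [hneut, myg_of_le_half hwle] at hle
    exact le_antisymm hle nonneg'
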